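/- If Δ_φ(ψ) is invertible (which holds when φ ≡_u ψ), then the intertwiner S : H_φ → H_ψ with S(π_φ(g)V_φξ) = π_ψ(g)V_ψξ factors as S = U Δ_φ(ψ)^{1/2} for a unitary U : H_φ → H_ψ, and Δ_φ(ψ) = S*S. -/

import Mathlib

open scoped ComplexOrder

noncomputable section

def IsInvolution (G : Type*) [Group G] (α : G → G) : Prop :=
  (∀ g, α (α g) = g) ∧ α 1 = 1 ∧ ∀ g : G, α g⁻¹ = (α g)⁻¹

def IsAlphaCP {G : Type*} [Group G] (α : G → G)
    {H : Type*} [NormedAddCommGroup H] [InnerProductSpace ℂ H] [CompleteSpace H]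
    (φ : G → H →L[ℂ] H) : Prop :=
  (∀ g₁ g₂ : G, φ (α g₁ * α g₂) = φ (α (g₁ * g₂)) ∧ φ (α (g₁ * g₂)) = φ (g₁ * g₂)) ∧
  (∀ (n : ℕ) (g : Fin n → G) (ξ : Fin n → H),
    0 ≤ ∑ i, ∑ j, (inner ℂ (φ ((α (g i))⁻¹ * g j) (ξ j)) (ξ i) : ℂ)) ∧
  (∃ K > (0 : ℝ), ∀ (n : ℕ) (g : Fin n → G) (ξ : Fin n → H),
    ∑ i, ∑ j, (inner ℂ (((ContinuousLinearMap.adjoint (φ (g i))) ∘L φ (g j)) (ξ j)) (ξ i) : ℂ) ≤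
      (K : ℂ) * ∑ i, ∑ j, (inner ℂ (φ ((α (g i))⁻¹ * g j) (ξ j)) (ξ i) : ℂ)) ∧
  (∀ g : G, ∃ M > (0 : ℝ), ∀ (n : ℕ) (gs : Fin n → G) (ξ : Fin n → H),
    ∑ i, ∑ j, (inner ℂ (φ ((α (g * gs i))⁻¹ * (g * gs j)) (ξ j)) (ξ i) : ℂ) ≤
      (M : ℂ) * ∑ i, ∑ j, (inner ℂ (φ ((α (gs i))⁻¹ * gs j) (ξ j)) (ξ i) : ℂ))

structure KreinDilation (G : Type*) [Group G] (α : G → G)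
    (H : Type*) [NormedAddCommGroup H] [InnerProductSpace ℂ H] [CompleteSpace H]
    (φ : G → H →L[ℂ] H) where
  K : Type
  [nK : NormedAddCommGroup K]
  [iK : InnerProductSpace ℂ K]
  [cK : CompleteSpace K]
  J : K →L[ℂ] K
  rep : G → K →L[ℂ] K
  V : H →L[ℂ] K
  J_sa : ContinuousLinearMap.adjoint J = J
  J_inv : J ∘L J = 1
  rep_one : rep 1 = 1
  rep_mul : ∀ g g', rep (g * g') = rep g ∘L rep g'
  rep_inv : ∀ g, rep g⁻¹ = J ∘L (ContinuousLinearMap.adjoint (rep g)) ∘L J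
  eq : ∀ g, φ g = (ContinuousLinearMap.adjoint V) ∘L rep g ∘L V
  minimal : (Submodule.span ℂ {x : K | ∃ g ξ, x = rep g (V ξ)}).topologicalClosure = ⊤
  commJ : ∀ g, J ∘L rep g ∘L V = rep (α g) ∘L V

attribute [instance] KreinDilation.nK KreinDilation.iK KreinDilation.cK

section Aux

open ContinuousLinearMap

variable {G : Type*} [Group G] {α : G → G}
    {H : Type*} [NormedAddCommGroup H] [InnerProductSpace ℂ H] [CompleteSpace H]
    {φ : G → H →L[ℂ] H}

namespace KreinDilation

lemma rep_apply_mul (D : KreinDilation G α H φ) (g g' : G) (x : D.K) :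
    D.rep g (D.rep g' x) = D.rep (g * g') x := by
  rw [D.rep_mul]; rfl

lemma J_apply_rep (D : KreinDilation G α H φ) (g : G) (ξ : H) :
    D.J (D.rep g (D.V ξ)) = D.rep (α g) (D.V ξ) := by
  have h := congrArg (fun T => T ξ) (D.commJ g)
  simpa using h

lemma J_apply_J (D : KreinDilation G α H φ) (x : D.K) : D.J (D.J x) = x := by
  have h := congrArg (fun T => T x) D.J_inv
  simpa using h

lemma adjoint_rep_apply (D : KreinDilation G α H φ) (g : G) (y : D.K) :
    adjoint (D.rep g) y = D.J (D.rep g⁻¹ (D.J y)) := by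
  have h := congrArg (fun T => T (D.J y)) (D.rep_inv g)
  simp only [coe_comp', Function.comp_apply] at h
  rw [D.J_apply_J] at h
  rw [h, D.J_apply_J]

lemma V_apply_eq (D : KreinDilation G α H φ) (g : G) (ξ : H) :
    adjoint D.V (D.rep g (D.V ξ)) = φ g ξ := by
  have h := congrArg (fun T => T ξ) (D.eq g)
  simpa using h.symm

lemma inner_rep (D : KreinDilation G α H φ) (hφα : ∀ h, φ (α h) = φ h)
    (g g' : G) (ξ ξ' : H) :
    (inner ℂ (D.rep g (D.V ξ)) (D.rep g' (D.V ξ')) : ℂ) =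
      inner ℂ (φ (g'⁻¹ * α g) ξ) ξ' := by
  rw [show (inner ℂ (D.rep g (D.V ξ)) (D.rep g' (D.V ξ')) : ℂ)
      = inner ℂ (adjoint (D.rep g') (D.rep g (D.V ξ))) (D.V ξ') from
    (adjoint_inner_left _ _ _).symm]
  rw [D.adjoint_rep_apply, D.J_apply_rep, D.rep_apply_mul, D.J_apply_rep]
  rw [show (inner ℂ (D.rep (α (g'⁻¹ * α g)) (D.V ξ)) (D.V ξ') : ℂ)
      = inner ℂ (adjoint D.V (D.rep (α (g'⁻¹ * α g)) (D.V ξ))) ξ' from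
    (adjoint_inner_left _ _ _).symm]
  rw [D.V_apply_eq, hφα]

lemma exists_sum_of_mem_span (D : KreinDilation G α H φ) {x : D.K}
    (hx : x ∈ Submodule.span ℂ {x : D.K | ∃ g ξ, x = D.rep g (D.V ξ)}) :
    ∃ (n : ℕ) (g : Fin n → G) (ξ : Fin n → H), x = ∑ i, D.rep (g i) (D.V (ξ i)) := by
  induction hx using Submodule.span_induction with
  | mem x hx =>
    obtain ⟨g, ξ, rfl⟩ := hx
    exact ⟨1, fun _ => g, fun _ => ξ, by simp⟩
  | zero => exact ⟨0, Fin.elim0, Fin.elim0, by simp⟩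
  | add x y _ _ hx hy =>
    obtain ⟨n, g, ξ, rfl⟩ := hx
    obtain ⟨m, g', ξ', rfl⟩ := hy
    refine ⟨n + m, Fin.append g g', Fin.append ξ ξ', ?_⟩
    rw [Fin.sum_univ_add]
    simp [Fin.append_left, Fin.append_right]
  | smul c x _ hx =>
    obtain ⟨n, g, ξ, rfl⟩ := hx
    refine ⟨n, g, fun i => c • ξ i, ?_⟩
    rw [Finset.smul_sum]
    exact Finset.sum_congr rfl fun i _ => by rw [map_smul, map_smul]

lemma mem_closure_span (D : KreinDilation G α H φ) (x : D.K) :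
    x ∈ closure ((Submodule.span ℂ {x : D.K | ∃ g ξ, x = D.rep g (D.V ξ)} :
      Submodule ℂ D.K) : Set D.K) := by
  rw [← Submodule.topologicalClosure_coe, D.minimal]
  exact Submodule.mem_top

lemma ext_of_dense (D : KreinDilation G α H φ) {M : Type*} [NormedAddCommGroup M]
    [InnerProductSpace ℂ M] (A B : D.K →L[ℂ] M)
    (h : ∀ g ξ, A (D.rep g (D.V ξ)) = B (D.rep g (D.V ξ))) : A = B := by
  ext x
  have heq : Set.EqOn A B ((Submodule.span ℂ {x : D.K | ∃ g ξ, x = D.rep g (D.V ξ)} :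
      Submodule ℂ D.K) : Set D.K) := by
    intro y hy
    obtain ⟨n, g, ξ, rfl⟩ := D.exists_sum_of_mem_span (by exact_mod_cast hy)
    show A _ = B _
    rw [map_sum, map_sum]
    exact Finset.sum_congr rfl fun i _ => h (g i) (ξ i)
  exact heq.closure A.continuous B.continuous (D.mem_closure_span x)

lemma inner_sum_sum (D : KreinDilation G α H φ) (hφα : ∀ h, φ (α h) = φ h)
    (n : ℕ) (g : Fin n → G) (ξ : Fin n → H) :
    (inner ℂ (∑ i, D.rep (g i) (D.V (ξ i))) (∑ i, D.rep (g i) (D.V (ξ i))) : ℂ)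
      = ∑ i, ∑ j, inner ℂ (φ ((g i)⁻¹ * α (g j)) (ξ j)) (ξ i) := by
  rw [inner_sum]
  refine Finset.sum_congr rfl fun i _ => ?_
  rw [sum_inner]
  exact Finset.sum_congr rfl fun j _ => D.inner_rep hφα (g j) (g i) (ξ j) (ξ i)

end KreinDilation

lemma IsAlphaCP.alpha_eq (hφ : IsAlphaCP α φ) (h : G) : φ (α h) = φ h := by
  have := (hφ.1 h 1).2
  simpa using this

end Aux

set_option maxHeartbeats 2000000 in
open ContinuousLinearMap in
theorem intertwiner_polar_factorization {G : Type*} [Group G] (α : G → G)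
    {H : Type*} [NormedAddCommGroup H] [InnerProductSpace ℂ H] [CompleteSpace H]
    (φ ψ : G → H →L[ℂ] H) (hα : IsInvolution G α)
    (hφ : IsAlphaCP α φ) (hψ : IsAlphaCP α ψ)
    (h₁ : ∃ l > (0 : ℝ), IsAlphaCP α (fun g => (l : ℂ) • φ g - ψ g))
    (h₂ : ∃ l > (0 : ℝ), IsAlphaCP α (fun g => (l : ℂ) • ψ g - φ g))
    (Dφ : KreinDilation G α H φ) (Dψ : KreinDilation G α H ψ)
    (S : Dφ.K →L[ℂ] Dψ.K)
    (hS : ∀ (g : G) (ξ : H), S (Dφ.rep g (Dφ.V ξ)) = Dψ.rep g (Dψ.V ξ)) :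
    ((adjoint S ∘L S).IsPositive ∧
      (∀ g : G, (adjoint S ∘L S) ∘L Dφ.rep g = Dφ.rep g ∘L (adjoint S ∘L S)) ∧
      (adjoint S ∘L S) ∘L Dφ.J = Dφ.J ∘L (adjoint S ∘L S) ∧
      (∀ g : G, ψ g = adjoint Dφ.V ∘L (adjoint S ∘L S) ∘L Dφ.rep g ∘L Dφ.V)) ∧
    (∀ R : Dφ.K →L[ℂ] Dφ.K, R.IsPositive → R ∘L R = adjoint S ∘L S →
      ∃ U : Dφ.K ≃ₗᵢ[ℂ] Dψ.K, ∀ x : Dφ.K, S x = U (R x)) := by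
  obtain ⟨l, hl, hcp⟩ := h₂
  have hφα : ∀ h, φ (α h) = φ h := hφ.alpha_eq
  have hψα : ∀ h, ψ (α h) = ψ h := hψ.alpha_eq
  -- operator intertwining identities
  have hSrep : ∀ g, S ∘L Dφ.rep g = Dψ.rep g ∘L S := by
    intro g
    apply Dφ.ext_of_dense
    intro g' ξ
    simp only [coe_comp', Function.comp_apply]
    rw [Dφ.rep_apply_mul, hS, hS, Dψ.rep_apply_mul]
  have hSrep_pt : ∀ g x, S (Dφ.rep g x) = Dψ.rep g (S x) := by
    intro g x
    have := congrArg (fun T => T x) (hSrep g)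
    simpa using this
  have hSJ : S ∘L Dφ.J = Dψ.J ∘L S := by
    apply Dφ.ext_of_dense
    intro g ξ
    simp only [coe_comp', Function.comp_apply]
    rw [Dφ.J_apply_rep, hS, hS, Dψ.J_apply_rep]
  have hS'J : Dφ.J ∘L adjoint S = adjoint S ∘L Dψ.J := by
    have h := congrArg adjoint hSJ
    rwa [adjoint_comp, adjoint_comp, Dφ.J_sa, Dψ.J_sa] at h
  have hJS'pt : ∀ y, Dφ.J (adjoint S y) = adjoint S (Dψ.J y) := by
    intro y
    have := congrArg (fun T => T y) hS'J
    simpa using this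
  have hadj : ∀ g, adjoint (Dφ.rep g) ∘L adjoint S = adjoint S ∘L adjoint (Dψ.rep g) := by
    intro g
    have h := congrArg adjoint (hSrep g)
    rwa [adjoint_comp, adjoint_comp] at h
  have hS'rep_pt : ∀ g x, Dφ.rep g (adjoint S x) = adjoint S (Dψ.rep g x) := by
    intro g x
    have h1 := congrArg (fun T => T (Dψ.J x)) (hadj g⁻¹)
    simp only [coe_comp', Function.comp_apply] at h1
    rw [Dφ.adjoint_rep_apply, Dψ.adjoint_rep_apply, inv_inv, Dψ.J_apply_J,
      hJS'pt, Dψ.J_apply_J, ← hJS'pt] at h1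
    have h2 := congrArg Dφ.J h1
    rwa [Dφ.J_apply_J, Dφ.J_apply_J] at h2
  have hSV_pt : ∀ ξ, S (Dφ.V ξ) = Dψ.V ξ := by
    intro ξ
    have h1 : Dφ.V ξ = Dφ.rep 1 (Dφ.V ξ) := by rw [Dφ.rep_one]; rfl
    have h2 : Dψ.rep 1 (Dψ.V ξ) = Dψ.V ξ := by rw [Dψ.rep_one]; rfl
    rw [h1, hS, h2]
  have hSV : S ∘L Dφ.V = Dψ.V := by
    ext ξ
    simpa using hSV_pt ξ
  have hV'S' : adjoint Dφ.V ∘L adjoint S = adjoint Dψ.V :=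
    (adjoint_comp S Dφ.V).symm.trans (congrArg adjoint hSV)
  have hV'S'pt : ∀ y, adjoint Dφ.V (adjoint S y) = adjoint Dψ.V y := by
    intro y
    have := congrArg (fun T => T y) hV'S'
    simpa using this
  -- the key norm inequality from h₂
  have key : ∀ x : Dφ.K, ‖x‖ ^ 2 ≤ l * ‖S x‖ ^ 2 := by
    have hsub : ((Submodule.span ℂ {x : Dφ.K | ∃ g ξ, x = Dφ.rep g (Dφ.V ξ)} :
        Submodule ℂ Dφ.K) : Set Dφ.K) ⊆ {x : Dφ.K | ‖x‖ ^ 2 ≤ l * ‖S x‖ ^ 2} := by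
      intro x hx
      obtain ⟨n, g, ξ, rfl⟩ := Dφ.exists_sum_of_mem_span (by exact_mod_cast hx)
      have hSx : S (∑ i, Dφ.rep (g i) (Dφ.V (ξ i))) = ∑ i, Dψ.rep (g i) (Dψ.V (ξ i)) := by
        rw [map_sum]
        exact Finset.sum_congr rfl fun i _ => hS _ _
      have hxx := Dφ.inner_sum_sum hφα n g ξ
      have hSxx := Dψ.inner_sum_sum hψα n g ξ
      have hpos := hcp.2.1 n (fun i => α (g i)) ξ
      simp only [hα.1, sub_apply, ContinuousLinearMap.smul_apply, inner_sub_left,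
        inner_smul_left, Complex.conj_ofReal, Finset.sum_sub_distrib, ← Finset.mul_sum] at hpos
      have hineq : (inner ℂ (∑ i, Dφ.rep (g i) (Dφ.V (ξ i)))
            (∑ i, Dφ.rep (g i) (Dφ.V (ξ i))) : ℂ)
          ≤ (l : ℂ) * inner ℂ (S (∑ i, Dφ.rep (g i) (Dφ.V (ξ i))))
            (S (∑ i, Dφ.rep (g i) (Dφ.V (ξ i)))) := by
        rw [hxx, hSx, hSxx]
        exact sub_nonneg.mp hpos
      rw [inner_self_eq_norm_sq_to_K, inner_self_eq_norm_sq_to_K] at hineq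
      have hcast : ((‖∑ i, Dφ.rep (g i) (Dφ.V (ξ i))‖ ^ 2 : ℝ) : ℂ)
          ≤ ((l * ‖S (∑ i, Dφ.rep (g i) (Dφ.V (ξ i)))‖ ^ 2 : ℝ) : ℂ) := by
        push_cast
        exact hineq
      exact_mod_cast hcast
    intro x
    have hcl : IsClosed {x : Dφ.K | ‖x‖ ^ 2 ≤ l * ‖S x‖ ^ 2} :=
      isClosed_le (by fun_prop) (by fun_prop)
    exact hcl.closure_subset_iff.mpr hsub (Dφ.mem_closure_span x)
  -- S is bijective
  have hbound : ∀ x : Dφ.K, ‖x‖ ≤ Real.toNNReal (Real.sqrt l) * ‖S x‖ := by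
    intro x
    have h1 : ‖x‖ ^ 2 ≤ (Real.sqrt l * ‖S x‖) ^ 2 := by
      rw [mul_pow, Real.sq_sqrt hl.le]
      exact key x
    have h2 := Real.sqrt_le_sqrt h1
    rwa [Real.sqrt_sq (norm_nonneg _), Real.sqrt_sq (by positivity),
      ← Real.coe_toNNReal (Real.sqrt l) (Real.sqrt_nonneg l)] at h2
  have hanti : AntilipschitzWith (Real.toNNReal (Real.sqrt l)) S :=
    S.antilipschitz_of_bound hbound
  have hrange : (S.range).topologicalClosure = ⊤ := by
    have hsp : Submodule.span ℂ {x : Dψ.K | ∃ g ξ, x = Dψ.rep g (Dψ.V ξ)} ≤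
        S.range := by
      rw [Submodule.span_le]
      rintro y ⟨g, ξ, rfl⟩
      exact ⟨Dφ.rep g (Dφ.V ξ), hS g ξ⟩
    exact le_antisymm le_top (Dψ.minimal ▸ Submodule.topologicalClosure_mono hsp)
  have hbij : Function.Bijective S :=
    (S.bijective_iff_dense_range_and_antilipschitz).mpr ⟨hrange, ⟨_, hanti⟩⟩
  refine ⟨⟨?_, ?_, ?_, ?_⟩, ?_⟩
  · -- positivity of S† S
    have := (isPositive_one (𝕜 := ℂ) (E := Dψ.K)).adjoint_conj S
    simpa [ContinuousLinearMap.one_def, ContinuousLinearMap.id_comp] using this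
  · -- commutes with rep
    intro g
    ext x
    simp only [coe_comp', Function.comp_apply]
    rw [hSrep_pt g x, ← hS'rep_pt g (S x)]
  · -- commutes with J
    ext x
    simp only [coe_comp', Function.comp_apply]
    have h1 : S (Dφ.J x) = Dψ.J (S x) := by
      have := congrArg (fun T => T x) hSJ
      simpa using this
    rw [h1, ← hJS'pt]
  · -- recovers ψ
    intro g
    ext ξ
    simp only [coe_comp', Function.comp_apply]
    rw [hS g ξ, hV'S'pt]
    exact (Dψ.V_apply_eq g ξ).symm
  · -- polar decomposition
    intro R hR hRR
    have hSS_pt : ∀ x, R (R x) = adjoint S (S x) := by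
      intro x
      have := congrArg (fun T => T x) hRR
      simpa using this
    have hRker : ∀ x, R x = 0 → x = 0 := by
      intro x hx
      have h0 : adjoint S (S x) = 0 := by rw [← hSS_pt, hx, map_zero]
      have h1 : (inner ℂ (S x) (S x) : ℂ) = 0 := by
        rw [← ContinuousLinearMap.adjoint_inner_right S x (S x), h0, inner_zero_right]
      have h2 : S x = 0 := inner_self_eq_zero.mp h1
      apply hbij.1
      rw [h2, map_zero]
    have hRinj : Function.Injective R := by
      intro a b hab
      have : R (a - b) = 0 := by rw [map_sub, hab, sub_self]
      exact sub_eq_zero.mp (hRker _ this)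
    have hker : S.ker = ⊥ := LinearMap.ker_eq_bot'.mpr
      (fun m hm => hbij.1 (by rw [map_zero]; exact hm))
    have hrgtop : S.range = ⊤ := LinearMap.range_eq_top.mpr hbij.2
    set T : Dψ.K →L[ℂ] Dφ.K :=
      ((ContinuousLinearEquiv.ofBijective S hker hrgtop).symm : Dψ.K →L[ℂ] Dφ.K) with hT
    have hTS : T ∘L S = ContinuousLinearMap.id ℂ Dφ.K := by
      ext w
      simp only [coe_comp', Function.comp_apply, ContinuousLinearMap.coe_id', id_eq, hT,
        ContinuousLinearEquiv.coe_coe]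
      exact ContinuousLinearEquiv.ofBijective_symm_apply_apply S hker hrgtop w
    have hS'T' : adjoint S ∘L adjoint T = ContinuousLinearMap.id ℂ Dφ.K := by
      rw [← adjoint_comp, hTS, adjoint_id]
    have hS'surj : Function.Surjective (adjoint S) := fun y =>
      ⟨adjoint T y, by
        have := congrArg (fun A => A y) hS'T'
        simpa using this⟩
    have hRsurj : Function.Surjective R := by
      intro y
      obtain ⟨z, hz⟩ := hS'surj y
      obtain ⟨w, hw⟩ := hbij.2 z
      exact ⟨R w, by rw [hSS_pt, hw, hz]⟩
    have hRbij : Function.Bijective R := ⟨hRinj, hRsurj⟩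
    set eR : Dφ.K ≃ₗ[ℂ] Dφ.K := LinearEquiv.ofBijective (R : Dφ.K →ₗ[ℂ] Dφ.K) hRbij with heR
    set eS : Dφ.K ≃ₗ[ℂ] Dψ.K := LinearEquiv.ofBijective (S : Dφ.K →ₗ[ℂ] Dψ.K) hbij with heS
    have hRsa : adjoint R = R := hR.isSelfAdjoint.adjoint_eq
    have hnorm : ∀ y : Dφ.K, ‖S y‖ = ‖R y‖ := by
      intro y
      have h1 : (inner ℂ (S y) (S y) : ℂ) = inner ℂ (R y) (R y) :=
        calc (inner ℂ (S y) (S y) : ℂ)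
            = inner ℂ y (adjoint S (S y)) := (ContinuousLinearMap.adjoint_inner_right S y (S y)).symm
          _ = inner ℂ y (R (R y)) := by rw [← hSS_pt]
          _ = inner ℂ (adjoint R y) (R y) := (ContinuousLinearMap.adjoint_inner_left R (R y) y).symm
          _ = inner ℂ (R y) (R y) := by rw [hRsa]
      rw [inner_self_eq_norm_sq_to_K, inner_self_eq_norm_sq_to_K] at h1
      have h2 : (‖S y‖ : ℝ) ^ 2 = ‖R y‖ ^ 2 := by exact_mod_cast h1
      calc ‖S y‖ = Real.sqrt (‖S y‖ ^ 2) := (Real.sqrt_sq (norm_nonneg _)).symm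
        _ = Real.sqrt (‖R y‖ ^ 2) := by rw [h2]
        _ = ‖R y‖ := Real.sqrt_sq (norm_nonneg _)
    refine ⟨⟨eR.symm.trans eS, ?_⟩, ?_⟩
    · intro x
      show ‖S (eR.symm x)‖ = ‖x‖
      rw [hnorm]
      have h3 : R (eR.symm x) = x := eR.apply_symm_apply x
      rw [h3]
    · intro x
      show S x = eS (eR.symm (R x))
      have h4 : eR.symm (R x) = x := eR.symm_apply_apply x
      rw [h4]
      rfl
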